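/- Fix c with 0 < c < 1 and suppose that for every group a ∈ G the conditional law of p(X) given g(X) = a has positive density on [0,1]. For α ∈ [0,1], let d_α be the decision rule d_α(x) = 1 if p(x) ≥ t_a(α) and 0 otherwise, where t_a(α) ∈ [0,1] satisfies μ(p(X) ≥ t_a(α) | g(X) = a) = α for each a ∈ G. Then the function f(α) = u(d_α, c) = E[d_α(X)·p(X)] − c·α is strictly concave on [0,1], and hence has a unique maximizer on [0,1]. -/

import Mathlib

open MeasureTheory ProbabilityTheory Set

noncomputable section

/-- A probability law on ℝ has positive density on `[0,1]`. -/
def PosDensity01 (ν : Measure ℝ) : Prop :=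
  ∃ φ : ℝ → ENNReal,
    ν = volume.withDensity φ ∧
    (∀ᵐ x ∂(volume.restrict (Icc (0:ℝ) 1)), 0 < φ x) ∧
    (∀ᵐ x ∂(volume : Measure ℝ), x ∉ Icc (0:ℝ) 1 → φ x = 0)

/-- with `d_α(x) = 1{p(x) ≥ t_{g(x)}(α)}` where the thresholds `t_a(α)`
satisfy `μ(p(X) ≥ t_a(α) | g(X) = a) = α`, the function
`f(α) = E[d_α(X)·p(X)] − c·α` is strictly concave on `[0,1]` and hence has a unique
maximizer on `[0,1]`. -/
theorem stmt_6
    {Ω 𝒳 G : Type*} [MeasurableSpace Ω] [MeasurableSpace 𝒳]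
    [Fintype G] [MeasurableSpace G] [MeasurableSingletonClass G]
    (μ : Measure Ω) [IsProbabilityMeasure μ]
    (X : Ω → 𝒳) (hX : Measurable X)
    (Y : Ω → ℝ) (hY : Measurable Y) (hY01 : ∀ ω, Y ω = 0 ∨ Y ω = 1)
    (p : 𝒳 → ℝ) (hp : Measurable p) (hp01 : ∀ x, p x ∈ Icc (0:ℝ) 1)
    (g : 𝒳 → G) (hg : Measurable g)
    (hgpos : ∀ a : G, 0 < μ {ω | g (X ω) = a})
    (hdens : ∀ a : G,
      PosDensity01 (Measure.map (fun ω => p (X ω))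
        (ProbabilityTheory.cond μ {ω | g (X ω) = a})))
    (c : ℝ) (hc0 : 0 < c) (hc1 : c < 1)
    (t : G → ℝ → ℝ)
    (ht : ∀ a : G, ∀ α ∈ Icc (0:ℝ) 1, t a α ∈ Icc (0:ℝ) 1 ∧
      (μ ({ω | t a α ≤ p (X ω)} ∩ {ω | g (X ω) = a})).toReal
        / (μ {ω | g (X ω) = a}).toReal = α) :
    StrictConcaveOn ℝ (Icc (0:ℝ) 1)
      (fun α =>
        (∫ ω, (if t (g (X ω)) α ≤ p (X ω) then (1:ℝ) else 0) * p (X ω) ∂μ) - c * α) ∧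
    ∃! α₀ : ℝ, α₀ ∈ Icc (0:ℝ) 1 ∧
      ∀ α ∈ Icc (0:ℝ) 1,
        (∫ ω, (if t (g (X ω)) α ≤ p (X ω) then (1:ℝ) else 0) * p (X ω) ∂μ) - c * α
          ≤ (∫ ω, (if t (g (X ω)) α₀ ≤ p (X ω) then (1:ℝ) else 0) * p (X ω) ∂μ)
              - c * α₀ := by
  classical
  have hq : Measurable fun ω => p (X ω) := hp.comp hX
  have hgX : Measurable fun ω => g (X ω) := hg.comp hX
  have hE : ∀ a : G, MeasurableSet {ω | g (X ω) = a} := fun a =>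
    hgX (measurableSet_singleton a)
  have hEfin : ∀ a : G, μ {ω | g (X ω) = a} ≠ ⊤ := fun a => measure_ne_top μ _
  set w : G → ℝ := fun a => (μ {ω | g (X ω) = a}).toReal with hw_def
  have hw : ∀ a, 0 < w a := fun a => ENNReal.toReal_pos (hgpos a).ne' (hEfin a)
  -- sum of weights is 1
  have hwsum : ∑ a : G, w a = 1 := by
    have hdisj : Pairwise (Function.onFun Disjoint fun a : G => {ω | g (X ω) = a}) := by
      intro a b hab
      rw [Function.onFun, Set.disjoint_left]
      rintro ω (ha : g (X ω) = a) (hb : g (X ω) = b)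
      exact hab (ha ▸ hb)
    have hcover : (⋃ a : G, {ω | g (X ω) = a}) = univ := by
      ext ω; simp
    have h1 := measure_iUnion (μ := μ) hdisj hE
    rw [hcover, measure_univ, tsum_fintype] at h1
    have h2 : (∑ a : G, μ {ω | g (X ω) = a}).toReal = 1 := by rw [← h1]; simp
    rwa [ENNReal.toReal_sum (fun a _ => hEfin a)] at h2
  have ht01 : ∀ a, ∀ α ∈ Icc (0:ℝ) 1, t a α ∈ Icc (0:ℝ) 1 := fun a α hα => (ht a α hα).1
  have htm : ∀ a, ∀ α ∈ Icc (0:ℝ) 1,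
      (μ ({ω | t a α ≤ p (X ω)} ∩ {ω | g (X ω) = a})).toReal = α * w a := by
    intro a α hα
    have h := (ht a α hα).2
    rw [div_eq_iff (hw a).ne'] at h
    exact h
  -- antitonicity of thresholds
  have hanti : ∀ a, ∀ α ∈ Icc (0:ℝ) 1, ∀ β ∈ Icc (0:ℝ) 1, α ≤ β → t a β ≤ t a α := by
    intro a α hα β hβ hαβ
    rcases eq_or_lt_of_le hαβ with rfl | hlt
    · exact le_refl _
    by_contra hcon
    push_neg at hcon
    have hsub : {ω | t a β ≤ p (X ω)} ∩ {ω | g (X ω) = a}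
        ⊆ {ω | t a α ≤ p (X ω)} ∩ {ω | g (X ω) = a} := by
      rintro ω ⟨h1, h2⟩
      exact ⟨le_trans hcon.le h1, h2⟩
    have hmono := ENNReal.toReal_mono (measure_ne_top μ _) (measure_mono hsub)
    rw [htm a α hα, htm a β hβ] at hmono
    have := le_of_mul_le_mul_right hmono (hw a)
    linarith
  -- null level sets within each group
  have hnull : ∀ (a : G) (s : ℝ), μ ({ω | p (X ω) = s} ∩ {ω | g (X ω) = a}) = 0 := by
    intro a s
    obtain ⟨φ, hφ, -, -⟩ := hdens a
    have hν : Measure.map (fun ω => p (X ω))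
        (ProbabilityTheory.cond μ {ω | g (X ω) = a}) {s} = 0 := by
      rw [hφ, withDensity_apply _ (measurableSet_singleton s),
        Measure.restrict_eq_zero.mpr (measure_singleton s), lintegral_zero_measure]
    rw [Measure.map_apply hq (measurableSet_singleton s), cond_apply (hE a) μ] at hν
    rcases mul_eq_zero.mp hν with h | h
    · exact absurd h (ENNReal.inv_ne_zero.mpr (hEfin a))
    · rw [Set.inter_comm] at h
      exact h
  -- integrand, value function, difference sets
  set D : ℝ → Ω → ℝ := fun γ ω => (if t (g (X ω)) γ ≤ p (X ω) then (1:ℝ) else 0) * p (X ω)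
    with hD_def
  set F : ℝ → ℝ := fun γ => ∫ ω, D γ ω ∂μ with hF_def
  have hmt : ∀ γ : ℝ, Measurable fun ω => t (g (X ω)) γ := fun γ =>
    (measurable_of_countable (fun a => t a γ)).comp hgX
  have hDm : ∀ γ, Measurable (D γ) := fun γ =>
    (Measurable.ite (measurableSet_le (hmt γ) hq) measurable_const measurable_const).mul hq
  have hDint : ∀ γ, Integrable (D γ) μ := by
    intro γ
    refine (integrable_const (1:ℝ)).mono' (hDm γ).aestronglyMeasurable (ae_of_all _ fun ω => ?_)
    simp only [hD_def, Real.norm_eq_abs]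
    by_cases h : t (g (X ω)) γ ≤ p (X ω)
    · simp only [h, if_true, one_mul]
      rw [abs_of_nonneg (hp01 (X ω)).1]
      exact (hp01 (X ω)).2
    · simp [h]
  have hqint : Integrable (fun ω => p (X ω)) μ := by
    refine (integrable_const (1:ℝ)).mono' hq.aestronglyMeasurable (ae_of_all _ fun ω => ?_)
    rw [Real.norm_eq_abs, abs_of_nonneg (hp01 (X ω)).1]
    exact (hp01 (X ω)).2
  have htint : ∀ γ ∈ Icc (0:ℝ) 1, Integrable (fun ω => t (g (X ω)) γ) μ := by
    intro γ hγ
    refine (integrable_const (1:ℝ)).mono' (hmt γ).aestronglyMeasurable (ae_of_all _ fun ω => ?_)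
    rw [Real.norm_eq_abs, abs_of_nonneg (ht01 _ γ hγ).1]
    exact (ht01 _ γ hγ).2
  set S : ℝ → ℝ → Set Ω :=
    fun α β => {ω | t (g (X ω)) β ≤ p (X ω) ∧ p (X ω) < t (g (X ω)) α} with hS_def
  have hSm : ∀ α β, MeasurableSet (S α β) := fun α β =>
    (measurableSet_le (hmt β) hq).inter (measurableSet_lt hq (hmt α))
  set T : ℝ → ℝ := fun γ => ∑ a : G, t a γ * w a with hT_def
  -- difference formula
  have hdiffF : ∀ α ∈ Icc (0:ℝ) 1, ∀ β ∈ Icc (0:ℝ) 1, α ≤ β →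
      F β - F α = ∫ ω in S α β, p (X ω) ∂μ := by
    intro α hα β hβ hαβ
    rw [hF_def]
    rw [← integral_sub (hDint β) (hDint α), ← integral_indicator (hSm α β)]
    congr 1
    funext ω
    have hle : t (g (X ω)) β ≤ t (g (X ω)) α := hanti _ α hα β hβ hαβ
    by_cases h1 : t (g (X ω)) α ≤ p (X ω)
    · have h2 : t (g (X ω)) β ≤ p (X ω) := le_trans hle h1
      have hns : ω ∉ S α β := fun hS => absurd hS.2 (not_lt.mpr h1)
      simp [hD_def, h1, h2, Set.indicator_of_notMem hns]
    · by_cases h2 : t (g (X ω)) β ≤ p (X ω)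
      · have hs : ω ∈ S α β := ⟨h2, lt_of_not_ge h1⟩
        simp [hD_def, h1, h2, Set.indicator_of_mem hs]
      · have hns : ω ∉ S α β := fun hS => h2 hS.1
        simp [hD_def, h1, h2, Set.indicator_of_notMem hns]
  -- group-wise measure of the difference sets
  have hSEa : ∀ α ∈ Icc (0:ℝ) 1, ∀ β ∈ Icc (0:ℝ) 1, α ≤ β → ∀ a : G,
      (μ (S α β ∩ {ω | g (X ω) = a})).toReal = (β - α) * w a := by
    intro α hα β hβ hαβ a
    have hset : S α β ∩ {ω | g (X ω) = a}
        = ({ω | t a β ≤ p (X ω)} ∩ {ω | g (X ω) = a})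
          \ ({ω | t a α ≤ p (X ω)} ∩ {ω | g (X ω) = a}) := by
      ext ω
      simp only [hS_def, mem_inter_iff, mem_setOf_eq, mem_diff, not_and]
      constructor
      · rintro ⟨⟨h1, h2⟩, ha⟩
        rw [ha] at h1 h2
        exact ⟨⟨h1, ha⟩, fun hc _ => absurd hc (not_le.mpr h2)⟩
      · rintro ⟨⟨h1, ha⟩, hnot⟩
        have h1' : t (g (X ω)) β ≤ p (X ω) := by rw [ha]; exact h1
        have h2' : p (X ω) < t (g (X ω)) α := by
          rw [ha]
          by_contra hcon
          exact hnot (not_lt.mp hcon) ha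
        exact ⟨⟨h1', h2'⟩, ha⟩
    have hsub : {ω | t a α ≤ p (X ω)} ∩ {ω | g (X ω) = a}
        ⊆ {ω | t a β ≤ p (X ω)} ∩ {ω | g (X ω) = a} := by
      rintro ω ⟨h1, h2⟩
      exact ⟨le_trans (hanti a α hα β hβ hαβ) h1, h2⟩
    rw [hset, measure_diff hsub
        (((measurableSet_le measurable_const hq).inter (hE a)).nullMeasurableSet)
        (measure_ne_top μ _),
      ENNReal.toReal_sub_of_le (measure_mono hsub) (measure_ne_top μ _),
      htm a β hβ, htm a α hα]
    ring
  -- integral of the threshold simple function over the difference set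
  have hsplit : ∀ α ∈ Icc (0:ℝ) 1, ∀ β ∈ Icc (0:ℝ) 1, α ≤ β → ∀ γ ∈ Icc (0:ℝ) 1,
      ∫ ω in S α β, t (g (X ω)) γ ∂μ = (β - α) * T γ := by
    intro α hα β hβ hαβ γ hγ
    have hpart : S α β = ⋃ a : G, S α β ∩ {ω | g (X ω) = a} := by
      ext ω
      simp only [mem_iUnion, mem_inter_iff, mem_setOf_eq]
      exact ⟨fun h => ⟨g (X ω), h, rfl⟩, fun ⟨a, h, _⟩ => h⟩
    have hdisj : Pairwise (Function.onFun Disjoint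
        fun a : G => S α β ∩ {ω | g (X ω) = a}) := by
      intro a b hab
      rw [Function.onFun, Set.disjoint_left]
      rintro ω ⟨-, (ha : g (X ω) = a)⟩ ⟨-, (hb : g (X ω) = b)⟩
      exact hab (ha ▸ hb)
    have hint : IntegrableOn (fun ω => t (g (X ω)) γ)
        (⋃ a : G, S α β ∩ {ω | g (X ω) = a}) μ := (htint γ hγ).integrableOn
    calc ∫ ω in S α β, t (g (X ω)) γ ∂μ
        = ∑' a : G, ∫ ω in S α β ∩ {ω | g (X ω) = a}, t (g (X ω)) γ ∂μ := by
          have h := integral_iUnion (fun a => (hSm α β).inter (hE a)) hdisj hint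
          rwa [← hpart] at h
      _ = ∑ a : G, ∫ ω in S α β ∩ {ω | g (X ω) = a}, t (g (X ω)) γ ∂μ := tsum_fintype _
      _ = ∑ a : G, (β - α) * (t a γ * w a) := by
          refine Finset.sum_congr rfl fun a _ => ?_
          have hc : ∫ ω in S α β ∩ {ω | g (X ω) = a}, t (g (X ω)) γ ∂μ
              = ∫ _ω in S α β ∩ {ω | g (X ω) = a}, t a γ ∂μ := by
            refine setIntegral_congr_fun ((hSm α β).inter (hE a)) fun ω hω => ?_
            rw [show g (X ω) = a from hω.2]
          rw [hc, setIntegral_const, smul_eq_mul, measureReal_def, hSEa α hα β hβ hαβ a]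
          ring
      _ = (β - α) * T γ := by rw [hT_def, Finset.mul_sum]
  -- upper bound for slopes
  have hub : ∀ α ∈ Icc (0:ℝ) 1, ∀ β ∈ Icc (0:ℝ) 1, α ≤ β →
      F β - F α ≤ (β - α) * T α := by
    intro α hα β hβ hαβ
    rw [hdiffF α hα β hβ hαβ, ← hsplit α hα β hβ hαβ α hα]
    refine setIntegral_mono_on hqint.integrableOn (htint α hα).integrableOn (hSm α β)
      fun ω hω => ?_
    exact (hω.2).le
  -- strict lower bound for slopes
  have hNE : Nonempty G := by
    have hΩ : Nonempty Ω := by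
      by_contra hemp
      rw [not_nonempty_iff] at hemp
      have : μ univ = 0 := by rw [Set.univ_eq_empty_iff.mpr hemp]; simp
      rw [measure_univ] at this
      exact one_ne_zero this
    exact ⟨g (X hΩ.some)⟩
  have hlb : ∀ α ∈ Icc (0:ℝ) 1, ∀ β ∈ Icc (0:ℝ) 1, α < β →
      (β - α) * T β < F β - F α := by
    intro α hα β hβ hαβ
    obtain ⟨a₀⟩ := hNE
    set A : Set Ω := S α β ∩ {ω | g (X ω) = a₀} with hA_def
    have hAm : MeasurableSet A := (hSm α β).inter (hE a₀)
    have hAμ : (μ A).toReal = (β - α) * w a₀ := hSEa α hα β hβ hαβ.le a₀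
    have hAμpos : 0 < μ A := by
      have h0 : 0 < (μ A).toReal := by
        rw [hAμ]; exact mul_pos (sub_pos.mpr hαβ) (hw a₀)
      exact (ENNReal.toReal_pos_iff.mp h0).1
    have hsuppm : MeasurableSet (Function.support fun ω => p (X ω) - t a₀ β) := by
      have : (Function.support fun ω => p (X ω) - t a₀ β)
          = {ω | p (X ω) - t a₀ β = 0}ᶜ := by
        ext ω; simp [Function.mem_support]
      rw [this]
      exact ((hq.sub measurable_const) (measurableSet_singleton 0)).compl
    have step1 : 0 < ∫ ω in A, (p (X ω) - t a₀ β) ∂μ := by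
      rw [setIntegral_pos_iff_support_of_nonneg_ae ?pos ?int]
      case pos =>
        refine (ae_restrict_iff' hAm).mpr (ae_of_all _ fun ω hω => ?_)
        have h1 : t (g (X ω)) β ≤ p (X ω) := hω.1.1
        rw [show g (X ω) = a₀ from hω.2] at h1
        exact sub_nonneg.mpr h1
      case int => exact (hqint.sub (integrable_const _)).integrableOn
      -- 0 < μ (support ∩ A)
      have hnullA : μ (A \ Function.support fun ω => p (X ω) - t a₀ β) = 0 := by
        refine measure_mono_null ?_ (hnull a₀ (t a₀ β))
        rintro ω ⟨hA', hs⟩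
        rw [Function.mem_support, not_not] at hs
        exact ⟨by simpa [sub_eq_zero] using hs, hA'.2⟩
      have heq := measure_inter_add_diff (μ := μ) A hsuppm
      rw [hnullA, add_zero] at heq
      rw [Set.inter_comm]
      rw [heq]
      exact hAμpos
    have step2 : ∫ ω in A, (p (X ω) - t a₀ β) ∂μ
        = ∫ ω in A, (p (X ω) - t (g (X ω)) β) ∂μ := by
      refine setIntegral_congr_fun hAm fun ω hω => ?_
      rw [show g (X ω) = a₀ from hω.2]
    have hintf0 : IntegrableOn (fun ω => p (X ω) - t (g (X ω)) β) (S α β) μ :=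
      (hqint.sub (htint β hβ)).integrableOn
    have step3 : ∫ ω in A, (p (X ω) - t (g (X ω)) β) ∂μ
        ≤ ∫ ω in S α β, (p (X ω) - t (g (X ω)) β) ∂μ := by
      refine setIntegral_mono_set hintf0 ?_ (HasSubset.Subset.eventuallyLE inter_subset_left)
      refine (ae_restrict_iff' (hSm α β)).mpr (ae_of_all _ fun ω hω => ?_)
      exact sub_nonneg.mpr hω.1
    have hfin : ∫ ω in S α β, (p (X ω) - t (g (X ω)) β) ∂μ
        = (F β - F α) - (β - α) * T β := by
      rw [integral_sub hqint.integrableOn (htint β hβ).integrableOn,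
        ← hdiffF α hα β hβ hαβ.le, hsplit α hα β hβ hαβ.le β hβ]
    have := lt_of_lt_of_le (step2 ▸ step1) step3
    rw [hfin] at this
    linarith
  -- bounds on T
  have hbound : ∀ γ ∈ Icc (0:ℝ) 1, T γ ≤ 1 := by
    intro γ hγ
    rw [hT_def, ← hwsum]
    refine Finset.sum_le_sum fun a _ => ?_
    nlinarith [hw a, (ht01 a γ hγ).1, (ht01 a γ hγ).2]
  -- strict concavity
  have hsc : StrictConcaveOn ℝ (Icc (0:ℝ) 1) (fun α => F α - c * α) := by
    rw [strictConcaveOn_iff_slope_strict_anti_adjacent]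
    refine ⟨convex_Icc 0 1, fun x y z hx hz hxy hyz => ?_⟩
    have hy : y ∈ Icc (0:ℝ) 1 := ⟨le_trans hx.1 hxy.le, le_trans hyz.le hz.2⟩
    have h1 : (y - x) * T y < F y - F x := hlb x hx y hy hxy
    have h2 : F z - F y ≤ (z - y) * T y := hub y hy z hz hyz.le
    have hxy' : 0 < y - x := sub_pos.mpr hxy
    have hyz' : 0 < z - y := sub_pos.mpr hyz
    show (F z - c * z - (F y - c * y)) / (z - y) < (F y - c * y - (F x - c * x)) / (y - x)
    have e1 : (F y - c * y - (F x - c * x)) / (y - x) = (F y - F x) / (y - x) - c := by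
      field_simp
      ring
    have e2 : (F z - c * z - (F y - c * y)) / (z - y) = (F z - F y) / (z - y) - c := by
      field_simp
      ring
    rw [e1, e2]
    have s1 : T y < (F y - F x) / (y - x) := (lt_div_iff₀ hxy').mpr (by linarith)
    have s2 : (F z - F y) / (z - y) ≤ T y := (div_le_iff₀ hyz').mpr (by linarith)
    linarith
  -- continuity
  have hcont : ContinuousOn (fun α => F α - c * α) (Icc (0:ℝ) 1) := by
    have hFc : ContinuousOn F (Icc (0:ℝ) 1) := by
      refine LipschitzOnWith.continuousOn (K := 1) ?_
      rw [lipschitzOnWith_iff_dist_le_mul]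
      intro x hx y hy
      wlog hle : y ≤ x generalizing x y
      · rw [dist_comm, dist_comm x y]
        exact this y hy x hx (le_of_not_ge hle)
      have h1 : 0 ≤ F x - F y := by
        rw [hdiffF y hy x hx hle]
        exact setIntegral_nonneg (hSm y x) fun ω _ => (hp01 (X ω)).1
      have h2 : F x - F y ≤ (x - y) * T y := hub y hy x hx hle
      have h3 : T y ≤ 1 := hbound y hy
      have h4 : 0 ≤ x - y := sub_nonneg.mpr hle
      rw [Real.dist_eq, Real.dist_eq, abs_of_nonneg h1, abs_of_nonneg h4, NNReal.coe_one,
        one_mul]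
      nlinarith
    exact hFc.sub ((continuous_const.mul continuous_id).continuousOn)
  obtain ⟨α₀, hα₀, hmax⟩ := isCompact_Icc.exists_isMaxOn (nonempty_Icc.mpr zero_le_one) hcont
  refine ⟨hsc, α₀, ⟨hα₀, fun α hα => hmax hα⟩, ?_⟩
  rintro y ⟨hy, hymax⟩
  by_contra hne
  have h1 : F α₀ - c * α₀ ≤ F y - c * y := hymax α₀ hα₀
  have h2 : F y - c * y ≤ F α₀ - c * α₀ := hmax hy
  have hmid : (1/2 : ℝ) • y + (1/2 : ℝ) • α₀ ∈ Icc (0:ℝ) 1 :=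
    (convex_Icc (0:ℝ) 1) hy hα₀ (by norm_num) (by norm_num) (by norm_num)
  have hlt := hsc.2 hy hα₀ hne (show (0:ℝ) < 1/2 by norm_num) (show (0:ℝ) < 1/2 by norm_num) (by norm_num)
  have h3 : (fun α => F α - c * α) ((1/2 : ℝ) • y + (1/2 : ℝ) • α₀) ≤ F α₀ - c * α₀ :=
    hmax hmid
  simp only [smul_eq_mul] at hlt h3
  linarith
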